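/- Let p ≥ 2 be an even integer and c ∈ ℝ with 0 ≤ c ≤ (p-1)/p^{p/(p-1)}. Then Q_{p,c}(x) = x^p + c has a fixed point a with 0 ≤ a, and the orbit Q_{p,c}^n(0) is contained in [0, a] for all n ≥ 1. -/

import Mathlib

theorem stmt_18 (p : ℕ) (hp : 2 ≤ p) (hpe : Even p) (c : ℝ) (hc0 : 0 ≤ c)
    (hc : c ≤ ((p : ℝ) - 1) / (p : ℝ) ^ ((p : ℝ) / ((p : ℝ) - 1))) :
    ∃ a : ℝ, 0 ≤ a ∧ a ^ p + c = a ∧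
      ∀ n : ℕ, 1 ≤ n → (fun x : ℝ => x ^ p + c)^[n] 0 ∈ Set.Icc 0 a := by
  have hq2 : (2:ℝ) ≤ (p:ℝ) := by exact_mod_cast hp
  set q : ℝ := (p:ℝ) with hqdef
  have hq0 : (0:ℝ) < q := by linarith
  have hq1 : (0:ℝ) < q - 1 := by linarith
  set x0 : ℝ := q ^ (-(1/(q-1))) with hx0
  have hx0pos : 0 < x0 := Real.rpow_pos_of_pos hq0 _
  have hy : x0 ^ p = q ^ (-(q/(q-1))) := by
    rw [hx0, ← Real.rpow_natCast (q ^ (-(1/(q-1)))) p, ← Real.rpow_mul hq0.le]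
    congr 1
    field_simp
    rfl
  have hx0q : x0 = q * q ^ (-(q/(q-1))) := by
    have h1 : q * q ^ (-(q/(q-1))) = q ^ (1 + -(q/(q-1))) := by
      rw [Real.rpow_add hq0, Real.rpow_one]
    rw [hx0, h1]
    congr 1
    field_simp
    ring
  have hcy : c ≤ (q - 1) * q ^ (-(q/(q-1))) := by
    rw [Real.rpow_neg hq0.le]
    calc c ≤ (q-1) / q ^ (q/(q-1)) := hc
    _ = (q-1) * (q ^ (q/(q-1)))⁻¹ := div_eq_mul_inv _ _
  have key : x0 ^ p + c ≤ x0 := by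
    rw [hy, hx0q]
    nlinarith [hcy]
  have hcont : ContinuousOn (fun x : ℝ => x ^ p + c - x) (Set.Icc 0 x0) :=
    (((continuous_pow p).add continuous_const).sub continuous_id).continuousOn
  have hivt := intermediate_value_Icc' hx0pos.le hcont
  have h0mem : (0:ℝ) ∈ Set.Icc ((fun x : ℝ => x ^ p + c - x) x0)
      ((fun x : ℝ => x ^ p + c - x) 0) := by
    constructor
    · simp only
      linarith
    · simp only
      rw [zero_pow (by omega)]
      linarith
  obtain ⟨a, haI, ha⟩ := hivt h0mem
  have ha0 : (0:ℝ) ≤ a := haI.1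
  simp only at ha
  have hafix : a ^ p + c = a := by linarith
  refine ⟨a, ha0, hafix, ?_⟩
  have hca : c ≤ a := by nlinarith [pow_nonneg ha0 p]
  have step : ∀ x : ℝ, x ∈ Set.Icc (0:ℝ) a → x ^ p + c ∈ Set.Icc (0:ℝ) a := by
    rintro x ⟨hx0', hxa⟩
    constructor
    · have := pow_nonneg hx0' p
      linarith
    · have := pow_le_pow_left₀ hx0' hxa p
      linarith
  intro n hn
  induction n with
  | zero => omega
  | succ m ih =>
    rw [Function.iterate_succ_apply']
    apply step
    rcases Nat.eq_zero_or_pos m with h | h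
    · subst h
      exact ⟨le_refl _, ha0⟩
    · exact ih h
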